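/- Suppose q1, q2 > 0 satisfy Q := 1/q1 + 1/q2 < 1, Q_{edge,1} := 3/(2q1) + 1/q2 > 1 and Q_{edge,2} := 1/q1 + 3/(2q2) > 1. Then ∫_{ℝ² \setminus [0,1]²} ( ∫_{[0,1]²} ρ(t−u, s−v) dt ds )² du dv < ∞, where ρ(t,s) = (|t|^{q1} + |s|^{q2})^{-1}. -/

import Mathlib

open MeasureTheory Real Set

noncomputable def rho (q1 q2 t s : ℝ) : ℝ := (|t| ^ q1 + |s| ^ q2)⁻¹

open scoped ENNReal

noncomputable def Aint (γ u : ℝ) : ℝ≥0∞ := ∫⁻ t in Icc (0:ℝ) 1, (ENNReal.ofReal |t - u|) ^ (-γ)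

lemma meas_g (γ : ℝ) : Measurable fun r : ℝ => (ENNReal.ofReal |r|) ^ (-γ) :=
  ENNReal.continuous_rpow_const.measurable.comp (measurable_id.abs.ennreal_ofReal)

lemma meas_g' (γ : ℝ) : Measurable fun r : ℝ => (ENNReal.ofReal r) ^ (-γ) :=
  ENNReal.continuous_rpow_const.measurable.comp measurable_id.ennreal_ofReal

lemma lint_shift (g : ℝ → ℝ≥0∞) (hg : Measurable g) {S : Set ℝ} (hS : MeasurableSet S) (c : ℝ) :
    ∫⁻ t in (fun t => t - c) ⁻¹' S, g (t - c) = ∫⁻ r in S, g r := by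
  have h := setLIntegral_map (μ := volume) hS hg (measurable_id.sub_const c)
  simp only [id_eq] at h
  rw [(measurePreserving_sub_right volume c).map_eq] at h
  exact h.symm

lemma lint_reflect (g : ℝ → ℝ≥0∞) (hg : Measurable g) {S : Set ℝ} (hS : MeasurableSet S) :
    ∫⁻ t in (fun t : ℝ => -t) ⁻¹' S, g (-t) = ∫⁻ r in S, g r := by
  have h := setLIntegral_map (μ := volume) hS hg measurable_neg
  rw [(Measure.measurePreserving_neg volume).map_eq] at h
  exact h.symm

lemma Aint_shift (γ u : ℝ) :
    Aint γ u = ∫⁻ r in Icc (-u) (1 - u), (ENNReal.ofReal |r|) ^ (-γ) := by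
  have h := lint_shift (fun r => (ENNReal.ofReal |r|) ^ (-γ)) (meas_g γ)
    (measurableSet_Icc (a := -u) (b := 1 - u)) u
  rw [preimage_sub_const_Icc] at h
  norm_num at h
  exact h

lemma rpow_neg_anti {x y : ℝ≥0∞} (hxy : x ≤ y) {γ : ℝ} (hγ : 0 ≤ γ) :
    y ^ (-γ) ≤ x ^ (-γ) := by
  rw [ENNReal.rpow_neg, ENNReal.rpow_neg]
  exact ENNReal.inv_le_inv' (ENNReal.rpow_le_rpow hxy hγ)

lemma pow_two_rpow (x : ℝ≥0∞) (c : ℝ) : (x ^ c) ^ 2 = x ^ (c * 2) := by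
  rw [← ENNReal.rpow_natCast (x ^ c) 2, ← ENNReal.rpow_mul]
  norm_num

lemma near_finite {p : ℝ} (hp : p < 1) {R : ℝ} (hR : 0 < R) :
    ∫⁻ r in Icc (0:ℝ) R, (ENNReal.ofReal r) ^ (-p) < ⊤ := by
  have hsub : Icc (0:ℝ) R ⊆ {0} ∪ Ioc 0 R := by
    intro x hx
    rcases eq_or_lt_of_le hx.1 with h | h
    · exact Or.inl (by simp [h.symm])
    · exact Or.inr ⟨h, hx.2⟩
  refine lt_of_le_of_lt ((lintegral_mono_set hsub).trans (lintegral_union_le _ _ _)) ?_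
  rw [setLIntegral_measure_zero _ _ (measure_singleton 0), zero_add]
  have h1 : ∫⁻ r in Ioc (0:ℝ) R, (ENNReal.ofReal r) ^ (-p)
      = ∫⁻ r in Ioc (0:ℝ) R, ENNReal.ofReal (r ^ (-p)) :=
    setLIntegral_congr_fun measurableSet_Ioc (fun r hr =>
      ENNReal.ofReal_rpow_of_pos hr.1)
  rw [h1]
  have hint : IntegrableOn (fun r : ℝ => r ^ (-p)) (Ioc 0 R) :=
    (intervalIntegral.intervalIntegrable_rpow' (by linarith)).1
  calc ∫⁻ r in Ioc (0:ℝ) R, ENNReal.ofReal (r ^ (-p))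
      ≤ ∫⁻ r in Ioc (0:ℝ) R, (‖r ^ (-p)‖₊ : ℝ≥0∞) :=
        lintegral_mono fun r => Real.ofReal_le_enorm _
    _ < ⊤ := hint.2

lemma tail_finite {p : ℝ} (hp : 1 < p) :
    ∫⁻ r in Ioi (1:ℝ), (ENNReal.ofReal r) ^ (-p) < ⊤ := by
  have h1 : ∫⁻ r in Ioi (1:ℝ), (ENNReal.ofReal r) ^ (-p)
      = ∫⁻ r in Ioi (1:ℝ), ENNReal.ofReal (r ^ (-p)) :=
    setLIntegral_congr_fun measurableSet_Ioi (fun r hr =>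
      ENNReal.ofReal_rpow_of_pos (lt_trans one_pos hr))
  rw [h1]
  have hint : IntegrableOn (fun r : ℝ => r ^ (-p)) (Ioi 1) :=
    integrableOn_Ioi_rpow_of_lt (by linarith) one_pos
  calc ∫⁻ r in Ioi (1:ℝ), ENNReal.ofReal (r ^ (-p))
      ≤ ∫⁻ r in Ioi (1:ℝ), (‖r ^ (-p)‖₊ : ℝ≥0∞) :=
        lintegral_mono fun r => Real.ofReal_le_enorm _
    _ < ⊤ := hint.2

lemma model_far {γ : ℝ} (hγ : 0 ≤ γ) (d : ℝ) :
    ∫⁻ w in Icc d (d+1), (ENNReal.ofReal w) ^ (-γ) ≤ (ENNReal.ofReal d) ^ (-γ) := by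
  calc ∫⁻ w in Icc d (d+1), (ENNReal.ofReal w) ^ (-γ)
      ≤ ∫⁻ _ in Icc d (d+1), (ENNReal.ofReal d) ^ (-γ) :=
        setLIntegral_mono measurable_const fun w hw =>
          rpow_neg_anti (ENNReal.ofReal_le_ofReal hw.1) hγ
    _ = (ENNReal.ofReal d) ^ (-γ) := by
        rw [setLIntegral_const, Real.volume_Icc, add_sub_cancel_left, ENNReal.ofReal_one, mul_one]

lemma model_near {γ : ℝ} (hγ : 1 < γ) {d : ℝ} (hd : 0 < d) :
    ∫⁻ w in Icc d (d+1), (ENNReal.ofReal w) ^ (-γ)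
      ≤ (ENNReal.ofReal d) ^ (1-γ) * ENNReal.ofReal (γ-1)⁻¹ := by
  have hsub : Icc d (d+1) ⊆ {d} ∪ Ioi d := by
    intro x hx
    rcases eq_or_lt_of_le hx.1 with h | h
    · exact Or.inl (by simp [h.symm])
    · exact Or.inr h
  refine le_trans ((lintegral_mono_set hsub).trans (lintegral_union_le _ _ _)) ?_
  rw [setLIntegral_measure_zero _ _ (measure_singleton d), zero_add]
  have h1 : ∫⁻ w in Ioi d, (ENNReal.ofReal w) ^ (-γ)
      = ∫⁻ w in Ioi d, ENNReal.ofReal (w ^ (-γ)) :=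
    setLIntegral_congr_fun measurableSet_Ioi (fun w hw =>
      ENNReal.ofReal_rpow_of_pos (hd.trans hw))
  rw [h1]
  have hint : IntegrableOn (fun w : ℝ => w ^ (-γ)) (Ioi d) :=
    integrableOn_Ioi_rpow_of_lt (by linarith) hd
  have hnn : 0 ≤ᵐ[volume.restrict (Ioi d)] fun w : ℝ => w ^ (-γ) :=
    (ae_restrict_iff' measurableSet_Ioi).2 (ae_of_all _ fun w hw =>
      Real.rpow_nonneg (le_of_lt (hd.trans hw)) _)
  rw [← MeasureTheory.ofReal_integral_eq_lintegral_ofReal hint hnn]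
  rw [integral_Ioi_rpow_of_lt (by linarith) hd]
  have hval : -d ^ (-γ + 1) / (-γ + 1) = d ^ (1-γ) * (γ-1)⁻¹ := by
    rw [show (-γ + 1 : ℝ) = -(γ-1) by ring, div_neg, neg_div, neg_neg, div_eq_mul_inv,
      show (-(γ-1) : ℝ) = 1 - γ by ring]
  rw [hval, ENNReal.ofReal_mul (Real.rpow_nonneg hd.le _),
    ENNReal.ofReal_rpow_of_pos hd]

lemma Aint_eq_of_gt {γ u : ℝ} (hu : 1 < u) :
    Aint γ u = ∫⁻ w in Icc (u-1) u, (ENNReal.ofReal w) ^ (-γ) := by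
  rw [Aint_shift]
  have h1 : ∫⁻ r in Icc (-u) (1-u), (ENNReal.ofReal |r|) ^ (-γ)
      = ∫⁻ r in Icc (-u) (1-u), (fun w => (ENNReal.ofReal w) ^ (-γ)) (-r) :=
    setLIntegral_congr_fun measurableSet_Icc (fun r hr => by
      have hr0 : r ≤ 0 := hr.2.trans (by linarith)
      simp only [abs_of_nonpos hr0])
  rw [h1]
  have h2 := lint_reflect (fun w => (ENNReal.ofReal w) ^ (-γ)) (meas_g' γ)
    (measurableSet_Icc (a := u-1) (b := u))
  rw [show (fun t : ℝ => -t) ⁻¹' Icc (u-1) u = Icc (-u) (1-u) by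
    ext x
    simp only [mem_preimage, mem_Icc]
    constructor <;> intro h <;> constructor <;> linarith [h.1, h.2]] at h2
  exact h2

lemma Aint_eq_of_lt {γ u : ℝ} (hu : u < 0) :
    Aint γ u = ∫⁻ w in Icc (-u) (-u+1), (ENNReal.ofReal w) ^ (-γ) := by
  rw [Aint_shift, show (1 - u : ℝ) = -u + 1 by ring]
  exact setLIntegral_congr_fun measurableSet_Icc (fun r hr => by
    simp only [abs_of_nonneg (le_trans (by linarith) hr.1)])

lemma Aint_le_mid {γ : ℝ} {v : ℝ} (hv : v ∈ Icc (-1:ℝ) 2) :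
    Aint γ v ≤ ∫⁻ r in Icc (-2:ℝ) 2, (ENNReal.ofReal |r|) ^ (-γ) := by
  rw [Aint_shift]
  exact lintegral_mono_set (Icc_subset_Icc (by linarith [hv.2]) (by linarith [hv.1]))

lemma K_finite {γ : ℝ} (hγ : γ < 1) :
    ∫⁻ r in Icc (-2:ℝ) 2, (ENNReal.ofReal |r|) ^ (-γ) < ⊤ := by
  have hsub : Icc (-2:ℝ) 2 ⊆ Icc (-2:ℝ) 0 ∪ Icc 0 2 := by
    intro x hx
    rcases le_total x 0 with h | h
    · exact Or.inl ⟨hx.1, h⟩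
    · exact Or.inr ⟨h, hx.2⟩
  refine lt_of_le_of_lt ((lintegral_mono_set hsub).trans (lintegral_union_le _ _ _)) ?_
  have hrefl : ∫⁻ r in Icc (-2:ℝ) 0, (ENNReal.ofReal |r|) ^ (-γ)
      = ∫⁻ r in Icc (0:ℝ) 2, (ENNReal.ofReal |r|) ^ (-γ) := by
    have h2 := lint_reflect (fun w => (ENNReal.ofReal |w|) ^ (-γ)) (meas_g γ)
      (measurableSet_Icc (a := (0:ℝ)) (b := 2))
    rw [show (fun t : ℝ => -t) ⁻¹' Icc (0:ℝ) 2 = Icc (-2:ℝ) 0 by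
      ext x
      simp only [mem_preimage, mem_Icc]
      constructor <;> intro h <;> constructor <;> linarith [h.1, h.2]] at h2
    rw [← h2]
    exact lintegral_congr fun r => by simp only [abs_neg]
  have hpos : ∫⁻ r in Icc (0:ℝ) 2, (ENNReal.ofReal |r|) ^ (-γ)
      = ∫⁻ r in Icc (0:ℝ) 2, (ENNReal.ofReal r) ^ (-γ) :=
    setLIntegral_congr_fun measurableSet_Icc (fun r hr => by
      simp only [abs_of_nonneg hr.1])
  have hfin := near_finite hγ (show (0:ℝ) < 2 by norm_num)
  rw [hrefl, hpos]
  exact ENNReal.add_lt_top.2 ⟨hfin, hfin⟩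

lemma sq_far_bound_left {γ : ℝ} (hγ : 0 ≤ γ) {v : ℝ} (hv : v < 0) :
    (Aint γ v) ^ 2 ≤ (ENNReal.ofReal (-v)) ^ (-(γ*2)) := by
  have h1 : Aint γ v ≤ (ENNReal.ofReal (-v)) ^ (-γ) := by
    rw [Aint_eq_of_lt hv]
    exact model_far hγ _
  calc (Aint γ v) ^ 2 ≤ ((ENNReal.ofReal (-v)) ^ (-γ)) ^ 2 :=
        pow_le_pow_left₀ (zero_le) h1 2
    _ = (ENNReal.ofReal (-v)) ^ (-(γ*2)) := by rw [pow_two_rpow, neg_mul]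

lemma sq_far_bound_right {γ : ℝ} (hγ : 0 ≤ γ) {v : ℝ} (hv : 1 < v) :
    (Aint γ v) ^ 2 ≤ (ENNReal.ofReal (v-1)) ^ (-(γ*2)) := by
  have h1 : Aint γ v ≤ (ENNReal.ofReal (v-1)) ^ (-γ) := by
    rw [Aint_eq_of_gt hv]
    have := model_far hγ (v-1)
    rwa [show (v-1+1 : ℝ) = v by ring] at this
  calc (Aint γ v) ^ 2 ≤ ((ENNReal.ofReal (v-1)) ^ (-γ)) ^ 2 :=
        pow_le_pow_left₀ (zero_le) h1 2
    _ = (ENNReal.ofReal (v-1)) ^ (-(γ*2)) := by rw [pow_two_rpow, neg_mul]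

lemma tail_piece_left {p : ℝ} (hp : 1 < p) :
    ∫⁻ v in Iio (-1:ℝ), (ENNReal.ofReal (-v)) ^ (-p) < ⊤ := by
  have h2 := lint_reflect (fun w => (ENNReal.ofReal w) ^ (-p)) (meas_g' p)
    (measurableSet_Ioi (a := (1:ℝ)))
  rw [show (fun t : ℝ => -t) ⁻¹' Ioi (1:ℝ) = Iio (-1:ℝ) by
    ext x; simp only [mem_preimage, mem_Ioi, mem_Iio]; constructor <;> intro <;> linarith] at h2
  rw [show (fun v : ℝ => (ENNReal.ofReal (-v)) ^ (-p)) = fun v : ℝ => (fun w => (ENNReal.ofReal w) ^ (-p)) (-v) from rfl]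
  exact h2 ▸ tail_finite hp

lemma tail_piece_right {p : ℝ} (hp : 1 < p) :
    ∫⁻ v in Ioi (2:ℝ), (ENNReal.ofReal (v-1)) ^ (-p) < ⊤ := by
  have h2 := lint_shift (fun w => (ENNReal.ofReal w) ^ (-p)) (meas_g' p)
    (measurableSet_Ioi (a := (1:ℝ))) 1
  rw [show (fun t : ℝ => t - 1) ⁻¹' Ioi (1:ℝ) = Ioi (2:ℝ) by
    ext x; simp only [mem_preimage, mem_Ioi]; constructor <;> intro <;> linarith] at h2
  exact h2 ▸ tail_finite hp

lemma near_piece_left {p : ℝ} (hp : p < 1) :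
    ∫⁻ u in Ico (-1:ℝ) 0, (ENNReal.ofReal (-u)) ^ (-p) < ⊤ := by
  have h2 := lint_reflect (fun w => (ENNReal.ofReal w) ^ (-p)) (meas_g' p)
    (measurableSet_Ioc (a := (0:ℝ)) (b := 1))
  rw [show (fun t : ℝ => -t) ⁻¹' Ioc (0:ℝ) 1 = Ico (-1:ℝ) 0 by
    ext x; simp only [mem_preimage, mem_Ioc, mem_Ico]
    constructor <;> intro h <;> exact ⟨by linarith [h.1, h.2], by linarith [h.1, h.2]⟩] at h2
  refine lt_of_le_of_lt (le_of_eq h2) (lt_of_le_of_lt (lintegral_mono_set Ioc_subset_Icc_self) ?_)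
  exact near_finite hp one_pos

lemma near_piece_right {p : ℝ} (hp : p < 1) :
    ∫⁻ u in Ioc (1:ℝ) 2, (ENNReal.ofReal (u-1)) ^ (-p) < ⊤ := by
  have h2 := lint_shift (fun w => (ENNReal.ofReal w) ^ (-p)) (meas_g' p)
    (measurableSet_Ioc (a := (0:ℝ)) (b := 1)) 1
  rw [show (fun t : ℝ => t - 1) ⁻¹' Ioc (0:ℝ) 1 = Ioc (1:ℝ) 2 by
    ext x; simp only [mem_preimage, mem_Ioc]
    constructor <;> intro h <;> exact ⟨by linarith [h.1, h.2], by linarith [h.1, h.2]⟩] at h2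
  refine lt_of_le_of_lt (le_of_eq h2) (lt_of_le_of_lt (lintegral_mono_set Ioc_subset_Icc_self) ?_)
  exact near_finite hp one_pos

lemma F1 {γ : ℝ} (hγl : 1/2 < γ) (hγr : γ < 1) :
    ∫⁻ v : ℝ, (Aint γ v) ^ 2 < ⊤ := by
  have hγ0 : (0:ℝ) ≤ γ := by linarith
  have hcover : (univ : Set ℝ) ⊆ Iio (-1:ℝ) ∪ Icc (-1:ℝ) 2 ∪ Ioi (2:ℝ) := by
    intro x _
    rcases lt_or_ge x (-1) with h | h
    · exact Or.inl (Or.inl h)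
    rcases le_or_gt x 2 with h2 | h2
    · exact Or.inl (Or.inr ⟨h, h2⟩)
    · exact Or.inr h2
  rw [← setLIntegral_univ]
  refine lt_of_le_of_lt ((lintegral_mono_set hcover).trans
    ((lintegral_union_le _ _ _).trans (add_le_add_left (lintegral_union_le _ _ _) _))) ?_
  have p1 : ∫⁻ v in Iio (-1:ℝ), (Aint γ v) ^ 2 < ⊤ := by
    refine lt_of_le_of_lt (setLIntegral_mono ((meas_g' (γ*2)).comp measurable_neg)
      fun v hv => sq_far_bound_left hγ0 (by exact lt_trans hv (by norm_num))) ?_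
    exact tail_piece_left (by linarith)
  have p2 : ∫⁻ v in Icc (-1:ℝ) 2, (Aint γ v) ^ 2 < ⊤ := by
    set K := ∫⁻ r in Icc (-2:ℝ) 2, (ENNReal.ofReal |r|) ^ (-γ) with hK
    calc ∫⁻ v in Icc (-1:ℝ) 2, (Aint γ v) ^ 2
        ≤ ∫⁻ _ in Icc (-1:ℝ) 2, K ^ 2 := setLIntegral_mono measurable_const
          fun v hv => pow_le_pow_left₀ (zero_le) (Aint_le_mid hv) 2
      _ = K ^ 2 * volume (Icc (-1:ℝ) 2) := setLIntegral_const _ _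
      _ < ⊤ := ENNReal.mul_lt_top (ENNReal.pow_lt_top (K_finite hγr))
          (by rw [Real.volume_Icc]; exact ENNReal.ofReal_lt_top)
  have p3 : ∫⁻ v in Ioi (2:ℝ), (Aint γ v) ^ 2 < ⊤ := by
    refine lt_of_le_of_lt (setLIntegral_mono
      ((meas_g' (γ*2)).comp (measurable_id.sub_const 1))
      fun v hv => sq_far_bound_right hγ0 (by exact lt_trans (by norm_num) hv)) ?_
    exact tail_piece_right (by linarith)
  exact ENNReal.add_lt_top.2 ⟨ENNReal.add_lt_top.2 ⟨p1, p2⟩, p3⟩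

lemma F2 {γ : ℝ} (hγl : 1 < γ) (hγr : γ < 3/2) :
    ∫⁻ u in (Icc (0:ℝ) 1)ᶜ, (Aint γ u) ^ 2 < ⊤ := by
  have hγ0 : (0:ℝ) ≤ γ := by linarith
  set C : ℝ≥0∞ := ENNReal.ofReal (γ-1)⁻¹ with hC
  have hCfin : C ^ 2 ≠ ⊤ := by
    exact (ENNReal.pow_lt_top ENNReal.ofReal_lt_top).ne
  have hcover : (Icc (0:ℝ) 1)ᶜ ⊆ (Iio (-1:ℝ) ∪ Ico (-1:ℝ) 0) ∪ (Ioc (1:ℝ) 2 ∪ Ioi (2:ℝ)) := by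
    intro x hx
    rw [mem_compl_iff, mem_Icc, not_and_or, not_le, not_le] at hx
    rcases hx with h | h
    · rcases lt_or_ge x (-1) with h1 | h1
      · exact Or.inl (Or.inl h1)
      · exact Or.inl (Or.inr ⟨h1, h⟩)
    · rcases le_or_gt x 2 with h1 | h1
      · exact Or.inr (Or.inl ⟨h, h1⟩)
      · exact Or.inr (Or.inr h1)
  refine lt_of_le_of_lt ((lintegral_mono_set hcover).trans
    ((lintegral_union_le _ _ _).trans
      (add_le_add (lintegral_union_le _ _ _) (lintegral_union_le _ _ _)))) ?_
  have p1 : ∫⁻ u in Iio (-1:ℝ), (Aint γ u) ^ 2 < ⊤ := by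
    refine lt_of_le_of_lt (setLIntegral_mono ((meas_g' (γ*2)).comp measurable_neg)
      fun v hv => sq_far_bound_left hγ0 (by exact lt_trans hv (by norm_num))) ?_
    exact tail_piece_left (by linarith)
  have p4 : ∫⁻ u in Ioi (2:ℝ), (Aint γ u) ^ 2 < ⊤ := by
    refine lt_of_le_of_lt (setLIntegral_mono
      ((meas_g' (γ*2)).comp (measurable_id.sub_const 1))
      fun v hv => sq_far_bound_right hγ0 (by exact lt_trans (by norm_num) hv)) ?_
    exact tail_piece_right (by linarith)
  have p2 : ∫⁻ u in Ico (-1:ℝ) 0, (Aint γ u) ^ 2 < ⊤ := by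
    have hb : ∀ u ∈ Ico (-1:ℝ) 0, (Aint γ u) ^ 2
        ≤ (ENNReal.ofReal (-u)) ^ (-((γ-1)*2)) * C ^ 2 := by
      intro u hu
      have hu0 : u < 0 := hu.2
      have h1 : Aint γ u ≤ (ENNReal.ofReal (-u)) ^ (1-γ) * C := by
        rw [Aint_eq_of_lt hu0]
        exact model_near hγl (by linarith)
      calc (Aint γ u) ^ 2 ≤ ((ENNReal.ofReal (-u)) ^ (1-γ) * C) ^ 2 :=
            pow_le_pow_left₀ (zero_le) h1 2
        _ = (ENNReal.ofReal (-u)) ^ (-((γ-1)*2)) * C ^ 2 := by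
            rw [mul_pow, pow_two_rpow, show ((1-γ)*2 : ℝ) = -((γ-1)*2) by ring]
    refine lt_of_le_of_lt (setLIntegral_mono
      ((((meas_g' ((γ-1)*2)).comp measurable_neg)).mul_const _) hb) ?_
    rw [lintegral_mul_const _ ((meas_g' ((γ-1)*2)).comp measurable_neg)]
    exact ENNReal.mul_lt_top (near_piece_left (by linarith)) hCfin.lt_top
  have p3 : ∫⁻ u in Ioc (1:ℝ) 2, (Aint γ u) ^ 2 < ⊤ := by
    have hb : ∀ u ∈ Ioc (1:ℝ) 2, (Aint γ u) ^ 2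
        ≤ (ENNReal.ofReal (u-1)) ^ (-((γ-1)*2)) * C ^ 2 := by
      intro u hu
      have hu1 : 1 < u := hu.1
      have h1 : Aint γ u ≤ (ENNReal.ofReal (u-1)) ^ (1-γ) * C := by
        rw [Aint_eq_of_gt hu1]
        have := model_near hγl (show (0:ℝ) < u - 1 by linarith)
        rwa [show (u-1+1 : ℝ) = u by ring] at this
      calc (Aint γ u) ^ 2 ≤ ((ENNReal.ofReal (u-1)) ^ (1-γ) * C) ^ 2 :=
            pow_le_pow_left₀ (zero_le) h1 2
        _ = (ENNReal.ofReal (u-1)) ^ (-((γ-1)*2)) * C ^ 2 := by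
            rw [mul_pow, pow_two_rpow, show ((1-γ)*2 : ℝ) = -((γ-1)*2) by ring]
    refine lt_of_le_of_lt (setLIntegral_mono
      ((((meas_g' ((γ-1)*2)).comp (measurable_id.sub_const 1))).mul_const _) hb) ?_
    rw [lintegral_mul_const _ ((meas_g' ((γ-1)*2)).comp (measurable_id.sub_const 1))]
    exact ENNReal.mul_lt_top (near_piece_right (by linarith)) hCfin.lt_top
  exact ENNReal.add_lt_top.2 ⟨ENNReal.add_lt_top.2 ⟨p1, p2⟩, ENNReal.add_lt_top.2 ⟨p3, p4⟩⟩

lemma rho_ofReal_le (q1 q2 : ℝ) (hq1 : 0 < q1) (hq2 : 0 < q2) {a : ℝ}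
    (ha0 : 0 < a) (ha1 : a < 1) (x y : ℝ) :
    ENNReal.ofReal ((|x| ^ q1 + |y| ^ q2)⁻¹)
      ≤ (ENNReal.ofReal |x|) ^ (-(a*q1)) * (ENNReal.ofReal |y|) ^ (-((1-a)*q2)) := by
  have hα : 0 < a * q1 := mul_pos ha0 hq1
  have hβ : 0 < (1-a) * q2 := mul_pos (by linarith) hq2
  rcases eq_or_lt_of_le (abs_nonneg x) with hx | hx
  · have hc : (ENNReal.ofReal |y|) ^ (-((1-a)*q2)) ≠ 0 := by
      rcases eq_or_lt_of_le (abs_nonneg y) with hy | hy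
      · rw [← hy, ENNReal.ofReal_zero, ENNReal.zero_rpow_of_neg (by linarith)]
        exact ENNReal.top_ne_zero
      · exact (ENNReal.rpow_pos (ENNReal.ofReal_pos.2 hy) ENNReal.ofReal_ne_top).ne'
    rw [← hx, ENNReal.ofReal_zero, ENNReal.zero_rpow_of_neg (by linarith), ENNReal.top_mul hc]
    exact le_top
  rcases eq_or_lt_of_le (abs_nonneg y) with hy | hy
  · have hc : (ENNReal.ofReal |x|) ^ (-(a*q1)) ≠ 0 :=
      (ENNReal.rpow_pos (ENNReal.ofReal_pos.2 hx) ENNReal.ofReal_ne_top).ne'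
    rw [← hy, ENNReal.ofReal_zero, ENNReal.zero_rpow_of_neg (by linarith), ENNReal.mul_top hc]
    exact le_top
  rw [ENNReal.ofReal_rpow_of_pos hx, ENNReal.ofReal_rpow_of_pos hy,
    ← ENNReal.ofReal_mul (Real.rpow_nonneg (abs_nonneg x) _)]
  apply ENNReal.ofReal_le_ofReal
  rw [Real.rpow_neg (abs_nonneg x), Real.rpow_neg (abs_nonneg y), ← mul_inv]
  have hprodpos : 0 < |x| ^ (a*q1) * |y| ^ ((1-a)*q2) := by positivity
  apply inv_anti₀ hprodpos
  have h1 : |x| ^ (a*q1) = (|x| ^ q1) ^ a := by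
    rw [← Real.rpow_mul (abs_nonneg x), mul_comm]
  have h2 : |y| ^ ((1-a)*q2) = (|y| ^ q2) ^ (1-a) := by
    rw [← Real.rpow_mul (abs_nonneg y), mul_comm]
  rw [h1, h2]
  calc (|x| ^ q1) ^ a * (|y| ^ q2) ^ (1-a)
      ≤ a * |x| ^ q1 + (1-a) * |y| ^ q2 :=
        Real.geom_mean_le_arith_mean2_weighted ha0.le (by linarith)
          (Real.rpow_nonneg (abs_nonneg x) _) (Real.rpow_nonneg (abs_nonneg y) _) (by ring)
    _ ≤ |x| ^ q1 + |y| ^ q2 := by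
        nlinarith [Real.rpow_nonneg (abs_nonneg x) q1, Real.rpow_nonneg (abs_nonneg y) q2]

lemma ofReal_integral_le {α : Type*} [MeasurableSpace α] (μ : Measure α) (f : α → ℝ)
    (hf : ∀ x, 0 ≤ f x) :
    ENNReal.ofReal (∫ x, f x ∂μ) ≤ ∫⁻ x, ENNReal.ofReal (f x) ∂μ := by
  by_cases hi : Integrable f μ
  · rw [MeasureTheory.ofReal_integral_eq_lintegral_ofReal hi (ae_of_all _ hf)]
  · rw [integral_undef hi]
    simp

lemma lint_prod_split (f g : ℝ → ℝ≥0∞) (hf : Measurable f) (hg : Measurable g)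
    (s t : Set ℝ) :
    ∫⁻ q : ℝ × ℝ in s ×ˢ t, f q.1 * g q.2 = (∫⁻ x in s, f x) * ∫⁻ y in t, g y := by
  rw [Measure.volume_eq_prod, ← Measure.prod_restrict]
  exact lintegral_prod_mul hf.aemeasurable hg.aemeasurable

lemma Aint_measurable (γ : ℝ) : Measurable (Aint γ) := by
  have : Measurable (Function.uncurry fun u t : ℝ => (ENNReal.ofReal |t - u|) ^ (-γ)) :=
    ENNReal.continuous_rpow_const.measurable.comp
      ((measurable_snd.sub measurable_fst).abs.ennreal_ofReal)
  exact Measurable.lintegral_prod_right this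

lemma inner_bound (q1 q2 : ℝ) (hq1 : 0 < q1) (hq2 : 0 < q2) {a : ℝ}
    (ha0 : 0 < a) (ha1 : a < 1) (p : ℝ × ℝ) :
    ENNReal.ofReal ((∫ q : ℝ × ℝ in Icc (0:ℝ) 1 ×ˢ Icc (0:ℝ) 1,
        rho q1 q2 (q.1 - p.1) (q.2 - p.2)) ^ 2)
      ≤ (Aint (a*q1) p.1) ^ 2 * (Aint ((1-a)*q2) p.2) ^ 2 := by
  have hrho_nn : ∀ q : ℝ × ℝ, 0 ≤ rho q1 q2 (q.1 - p.1) (q.2 - p.2) := by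
    intro q
    unfold rho
    positivity
  have hI : 0 ≤ ∫ q : ℝ × ℝ in Icc (0:ℝ) 1 ×ˢ Icc (0:ℝ) 1,
      rho q1 q2 (q.1 - p.1) (q.2 - p.2) := integral_nonneg hrho_nn
  rw [ENNReal.ofReal_pow hI]
  have step1 : ENNReal.ofReal (∫ q : ℝ × ℝ in Icc (0:ℝ) 1 ×ˢ Icc (0:ℝ) 1,
        rho q1 q2 (q.1 - p.1) (q.2 - p.2))
      ≤ Aint (a*q1) p.1 * Aint ((1-a)*q2) p.2 := by
    refine le_trans (ofReal_integral_le _ _ hrho_nn) ?_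
    have step2 : ∫⁻ q : ℝ × ℝ in Icc (0:ℝ) 1 ×ˢ Icc (0:ℝ) 1,
          ENNReal.ofReal (rho q1 q2 (q.1 - p.1) (q.2 - p.2))
        ≤ ∫⁻ q : ℝ × ℝ in Icc (0:ℝ) 1 ×ˢ Icc (0:ℝ) 1,
          (ENNReal.ofReal |q.1 - p.1|) ^ (-(a*q1)) * (ENNReal.ofReal |q.2 - p.2|) ^ (-((1-a)*q2)) :=
      lintegral_mono fun q => rho_ofReal_le q1 q2 hq1 hq2 ha0 ha1 _ _
    refine step2.trans (le_of_eq ?_)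
    exact lint_prod_split _ _
      (ENNReal.continuous_rpow_const.measurable.comp ((measurable_id.sub_const p.1).abs.ennreal_ofReal))
      (ENNReal.continuous_rpow_const.measurable.comp ((measurable_id.sub_const p.2).abs.ennreal_ofReal))
      _ _
  calc (ENNReal.ofReal (∫ q : ℝ × ℝ in Icc (0:ℝ) 1 ×ˢ Icc (0:ℝ) 1,
        rho q1 q2 (q.1 - p.1) (q.2 - p.2))) ^ 2
      ≤ (Aint (a*q1) p.1 * Aint ((1-a)*q2) p.2) ^ 2 := pow_le_pow_left₀ (zero_le) step1 2
    _ = (Aint (a*q1) p.1) ^ 2 * (Aint ((1-a)*q2) p.2) ^ 2 := mul_pow _ _ 2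

theorem stmt_8 (q1 q2 : ℝ) (hq1 : 0 < q1) (hq2 : 0 < q2)
    (hQ : 1 / q1 + 1 / q2 < 1)
    (hE1 : 1 < 3 / (2 * q1) + 1 / q2) (hE2 : 1 < 1 / q1 + 3 / (2 * q2)) :
    ∫⁻ p : ℝ × ℝ in (Icc (0 : ℝ) 1 ×ˢ Icc (0 : ℝ) 1)ᶜ,
      ENNReal.ofReal ((∫ q : ℝ × ℝ in Icc (0 : ℝ) 1 ×ˢ Icc (0 : ℝ) 1,
        rho q1 q2 (q.1 - p.1) (q.2 - p.2)) ^ 2) < ⊤ := by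
  have hr1 : 0 < 1/q1 := by positivity
  have hr2 : 0 < 1/q2 := by positivity
  have he1 : 3/(2*q1) = (3/2) * (1/q1) := by ring
  have he2 : 3/(2*q2) = (3/2) * (1/q2) := by ring
  have he3 : 1/(2*q1) = (1/2) * (1/q1) := by ring
  have he4 : 1/(2*q2) = (1/2) * (1/q2) := by ring
  -- choose a1 for region 1
  obtain ⟨a1, ha1l, ha1r⟩ : ∃ a : ℝ, max (1/q1) (1 - 1/q2) < a ∧
      a < min (3/(2*q1)) (1 - 1/(2*q2)) := by
    refine exists_between (max_lt (lt_min ?_ ?_) (lt_min ?_ ?_))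
    · rw [he1]; linarith
    · rw [he4]; linarith
    · rw [he1]; linarith
    · rw [he4]; linarith
  have ha1q : 1/q1 < a1 := lt_of_le_of_lt (le_max_left _ _) ha1l
  have ha1q2 : 1 - 1/q2 < a1 := lt_of_le_of_lt (le_max_right _ _) ha1l
  have ha1u : a1 < 3/(2*q1) := lt_of_lt_of_le ha1r (min_le_left _ _)
  have ha1u2 : a1 < 1 - 1/(2*q2) := lt_of_lt_of_le ha1r (min_le_right _ _)
  have ha10 : 0 < a1 := lt_trans hr1 ha1q
  have ha11 : a1 < 1 := by rw [he4] at ha1u2; linarith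
  have hα1 : 1 < a1 * q1 := by
    rw [div_lt_iff₀ hq1] at ha1q; linarith
  have hα2 : a1 * q1 < 3/2 := by
    rw [he1] at ha1u
    have h := mul_lt_mul_of_pos_right ha1u hq1
    have key : (3/2 : ℝ) * (1/q1) * q1 = 3/2 := by field_simp <;> ring
    linarith
  have hβ1 : 1/2 < (1 - a1) * q2 := by
    rw [he4] at ha1u2
    have h : (1/2) * (1/q2) < 1 - a1 := by linarith
    have h2 := mul_lt_mul_of_pos_right h hq2
    have key : (1/2 : ℝ) * (1/q2) * q2 = 1/2 := by field_simp <;> ring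
    linarith
  have hβ2 : (1 - a1) * q2 < 1 := by
    have h : 1 - a1 < 1/q2 := by linarith
    have h2 := mul_lt_mul_of_pos_right h hq2
    have key : (1/q2 : ℝ) * q2 = 1 := by field_simp <;> ring
    linarith
  -- choose a2 for region 2
  obtain ⟨a2, ha2l, ha2r⟩ : ∃ a : ℝ, max (1/(2*q1)) (1 - 3/(2*q2)) < a ∧
      a < min (1/q1) (1 - 1/q2) := by
    refine exists_between (max_lt (lt_min ?_ ?_) (lt_min ?_ ?_))
    · rw [he3]; linarith
    · rw [he3]; linarith
    · rw [he2]; linarith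
    · rw [he2]; linarith
  have ha2q : 1/(2*q1) < a2 := lt_of_le_of_lt (le_max_left _ _) ha2l
  have ha2q2 : 1 - 3/(2*q2) < a2 := lt_of_le_of_lt (le_max_right _ _) ha2l
  have ha2u : a2 < 1/q1 := lt_of_lt_of_le ha2r (min_le_left _ _)
  have ha2u2 : a2 < 1 - 1/q2 := lt_of_lt_of_le ha2r (min_le_right _ _)
  have ha20 : 0 < a2 := by rw [he3] at ha2q; linarith
  have ha21 : a2 < 1 := by linarith
  have hα1' : 1/2 < a2 * q1 := by
    rw [he3] at ha2q
    have h2 := mul_lt_mul_of_pos_right ha2q hq1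
    have key : (1/2 : ℝ) * (1/q1) * q1 = 1/2 := by field_simp <;> ring
    linarith
  have hα2' : a2 * q1 < 1 := by
    have h2 := mul_lt_mul_of_pos_right ha2u hq1
    have key : (1/q1 : ℝ) * q1 = 1 := by field_simp <;> ring
    linarith
  have hβ1' : 1 < (1 - a2) * q2 := by
    have h : 1/q2 < 1 - a2 := by linarith
    have h2 := mul_lt_mul_of_pos_right h hq2
    have key : (1/q2 : ℝ) * q2 = 1 := by field_simp <;> ring
    linarith
  have hβ2' : (1 - a2) * q2 < 3/2 := by
    rw [he2] at ha2q2
    have h : 1 - a2 < (3/2) * (1/q2) := by linarith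
    have h2 := mul_lt_mul_of_pos_right h hq2
    have key : (3/2 : ℝ) * (1/q2) * q2 = 3/2 := by field_simp <;> ring
    linarith
  -- split the complement
  rw [compl_prod_eq_union]
  refine lt_of_le_of_lt (lintegral_union_le _ _ _) (ENNReal.add_lt_top.2 ⟨?_, ?_⟩)
  · calc ∫⁻ p : ℝ × ℝ in (Icc (0:ℝ) 1)ᶜ ×ˢ (univ : Set ℝ),
        ENNReal.ofReal ((∫ q : ℝ × ℝ in Icc (0 : ℝ) 1 ×ˢ Icc (0 : ℝ) 1,
          rho q1 q2 (q.1 - p.1) (q.2 - p.2)) ^ 2)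
        ≤ ∫⁻ p : ℝ × ℝ in (Icc (0:ℝ) 1)ᶜ ×ˢ (univ : Set ℝ),
          (Aint (a1*q1) p.1) ^ 2 * (Aint ((1-a1)*q2) p.2) ^ 2 :=
          lintegral_mono fun p => inner_bound q1 q2 hq1 hq2 ha10 ha11 p
      _ = (∫⁻ u in (Icc (0:ℝ) 1)ᶜ, (Aint (a1*q1) u) ^ 2) *
          ∫⁻ v in (univ : Set ℝ), (Aint ((1-a1)*q2) v) ^ 2 :=
          lint_prod_split _ _ ((Aint_measurable _).pow_const 2)
            ((Aint_measurable _).pow_const 2) _ _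
      _ < ⊤ := by
          rw [setLIntegral_univ]
          exact ENNReal.mul_lt_top (F2 hα1 hα2) (F1 hβ1 hβ2)
  · calc ∫⁻ p : ℝ × ℝ in (univ : Set ℝ) ×ˢ (Icc (0:ℝ) 1)ᶜ,
        ENNReal.ofReal ((∫ q : ℝ × ℝ in Icc (0 : ℝ) 1 ×ˢ Icc (0 : ℝ) 1,
          rho q1 q2 (q.1 - p.1) (q.2 - p.2)) ^ 2)
        ≤ ∫⁻ p : ℝ × ℝ in (univ : Set ℝ) ×ˢ (Icc (0:ℝ) 1)ᶜ,
          (Aint (a2*q1) p.1) ^ 2 * (Aint ((1-a2)*q2) p.2) ^ 2 :=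
          lintegral_mono fun p => inner_bound q1 q2 hq1 hq2 ha20 ha21 p
      _ = (∫⁻ u in (univ : Set ℝ), (Aint (a2*q1) u) ^ 2) *
          ∫⁻ v in (Icc (0:ℝ) 1)ᶜ, (Aint ((1-a2)*q2) v) ^ 2 :=
          lint_prod_split _ _ ((Aint_measurable _).pow_const 2)
            ((Aint_measurable _).pow_const 2) _ _
      _ < ⊤ := by
          rw [setLIntegral_univ]
          exact ENNReal.mul_lt_top (F1 hα1' hα2') (F2 hβ1' hβ2')
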